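/- Let z, z' ∈ ℝ^V, p = softmax(z), q = softmax(z'), and let Π = I − (1/V)𝟏𝟏ᵀ be the orthogonal projection onto the subspace orthogonal to 𝟏. Suppose κ > 0 satisfies vᵀJ(softmax(z' + s(z−z')))v ≥ κ‖v‖₂² for all s ∈ [0,1] and all v orthogonal to 𝟏, where J(p) = diag(p) − ppᵀ. Then ‖p − q‖₂ ≥ κ‖Π(z − z')‖₂. -/

import Mathlib

open Real BigOperators Matrix

/-- Softmax on `ℝ^V`. -/
noncomputable def softmax {V : ℕ} (z : Fin V → ℝ) : Fin V → ℝ :=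
  fun i => Real.exp (z i) / ∑ j, Real.exp (z j)

/-- Softmax Jacobian `J(p) = diag(p) - p pᵀ`. -/
noncomputable def softmaxJac {V : ℕ} (p : Fin V → ℝ) : Matrix (Fin V) (Fin V) ℝ :=
  Matrix.diagonal p - Matrix.vecMulVec p p

/-- Orthogonal projection onto the subspace orthogonal to the all-ones vector:
`(proj v) i = v i - (∑ j v j) / V`. -/
noncomputable def projOne {V : ℕ} (v : Fin V → ℝ) : Fin V → ℝ :=
  fun i => v i - (∑ j, v j) / V

lemma sum_exp_pos {V : ℕ} (hV : 0 < V) (a : Fin V → ℝ) : 0 < ∑ j, Real.exp (a j) :=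
  Finset.sum_pos (fun j _ => Real.exp_pos _) (by simpa [Finset.univ_nonempty_iff, ← Fin.pos_iff_nonempty])

lemma softmax_sum_one {V : ℕ} (hV : 0 < V) (a : Fin V → ℝ) : ∑ i, softmax a i = 1 := by
  have h := sum_exp_pos hV a
  simp only [softmax, ← Finset.sum_div]
  field_simp

lemma softmax_hasDerivAt {V : ℕ} (hV : 0 < V) (a d : Fin V → ℝ) (i : Fin V) (s : ℝ) :
    HasDerivAt (fun t => softmax (a + t • d) i)
      (softmax (a + s • d) i * d i -
        softmax (a + s • d) i * ∑ j, softmax (a + s • d) j * d j) s := by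
  have hfun : ∀ t, ∀ j, (a + t • d) j = a j + t * d j := by intro t j; simp [mul_comm]
  have hn : HasDerivAt (fun t => Real.exp (a i + t * d i)) (Real.exp (a i + s * d i) * d i) s := by
    have : HasDerivAt (fun t : ℝ => a i + t * d i) (d i) s := by
      simpa using ((hasDerivAt_id s).mul_const (d i)).const_add (a i)
    simpa [mul_comm] using this.exp
  have hN : HasDerivAt (fun t => ∑ j, Real.exp (a j + t * d j))
      (∑ j, Real.exp (a j + s * d j) * d j) s := by
    apply HasDerivAt.fun_sum
    intro j _
    have : HasDerivAt (fun t : ℝ => a j + t * d j) (d j) s := by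
      simpa using ((hasDerivAt_id s).mul_const (d j)).const_add (a j)
    simpa [mul_comm] using this.exp
  have hNpos : (0:ℝ) < ∑ j, Real.exp (a j + s * d j) := by
    have := sum_exp_pos hV (fun j => a j + s * d j); simpa using this
  have hdiv := hn.fun_div hN hNpos.ne'
  have heq : (fun t => softmax (a + t • d) i) =
      fun t => Real.exp (a i + t * d i) / ∑ j, Real.exp (a j + t * d j) := by
    funext t; simp [softmax, hfun]
  rw [heq]
  refine hdiv.congr_deriv ?_
  symm
  simp only [softmax, hfun]
  set N := ∑ j, Real.exp (a j + s * d j) with hNdef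
  have : ∑ j, Real.exp (a j + s * d j) / N * d j = (∑ j, Real.exp (a j + s * d j) * d j) / N := by
    rw [Finset.sum_div]; congr 1; funext j; ring
  rw [this]
  field_simp

/-- If the softmax Jacobian has curvature at least `κ > 0` on `𝟏^⊥` along the logit segment,
then `‖softmax z - softmax z'‖₂ ≥ κ ‖Π(z - z')‖₂`. -/
theorem softmax_diff_lower_bound {V : ℕ} (hV : 0 < V) (z z' : Fin V → ℝ) (κ : ℝ) (hκpos : 0 < κ)
    (hκ : ∀ s ∈ Set.Icc (0:ℝ) 1, ∀ v : Fin V → ℝ, (∑ i, v i) = 0 →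
      κ * ∑ i, v i ^ 2 ≤ v ⬝ᵥ (softmaxJac (softmax (z' + s • (z - z'))) *ᵥ v)) :
    κ * Real.sqrt (∑ i, projOne (z - z') i ^ 2) ≤
      Real.sqrt (∑ i, (softmax z i - softmax z' i) ^ 2) := by
  set d := z - z' with hd
  set v := projOne d with hv
  have hVne : (V:ℝ) ≠ 0 := Nat.cast_pos.mpr hV |>.ne'
  have hvsum : ∑ i, v i = 0 := by
    have : ∑ i, v i = (∑ i, d i) - V * ((∑ j, d j) / V) := by
      simp [hv, projOne, Finset.sum_sub_distrib, Finset.sum_const, Finset.card_univ,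
        nsmul_eq_mul]
    rw [this]; field_simp; ring
  -- v ⬝ J *ᵥ d = v ⬝ J *ᵥ v for J = softmaxJac (softmax w)
  have hJ : ∀ w : Fin V → ℝ, v ⬝ᵥ (softmaxJac (softmax w) *ᵥ d) = v ⬝ᵥ (softmaxJac (softmax w) *ᵥ v) := by
    intro w
    have hker : softmaxJac (softmax w) *ᵥ (fun _ => (∑ j, d j) / V : Fin V → ℝ) = 0 := by
      funext i
      simp only [softmaxJac, Matrix.mulVec, dotProduct, Matrix.sub_apply,
        Matrix.diagonal_apply, Matrix.vecMulVec_apply, Pi.zero_apply, sub_mul,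
        Finset.sum_sub_distrib, ite_mul, zero_mul]
      simp only [Finset.sum_ite_eq, Finset.mem_univ, if_true]
      have : ∑ j, softmax w i * softmax w j * ((∑ j, d j) / V)
          = softmax w i * ((∑ j, d j) / V) * ∑ j, softmax w j := by
        rw [Finset.mul_sum]; congr 1; funext j; ring
      simp [this, softmax_sum_one hV w]
    have hdv : d = v + (fun _ => (∑ j, d j) / V) := by
      funext i; simp [hv, projOne]
    rw [hdv, Matrix.mulVec_add, hker, add_zero]
  -- the scalar function
  set p := fun s : ℝ => softmax (z' + s • d) with hp
  set h := fun s : ℝ => ∑ i, v i * p s i with hph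
  have hderiv : ∀ s : ℝ, HasDerivAt h (v ⬝ᵥ (softmaxJac (p s) *ᵥ d)) s := by
    intro s
    have : HasDerivAt h (∑ i, v i * (p s i * d i - p s i * ∑ j, p s j * d j)) s := by
      apply HasDerivAt.fun_sum
      intro i _
      exact (softmax_hasDerivAt hV z' d i s).const_mul (v i)
    convert this using 1
    simp only [dotProduct, softmaxJac, Matrix.mulVec, Matrix.sub_apply,
      Matrix.diagonal_apply, Matrix.vecMulVec_apply, ite_mul, zero_mul, sub_mul,
      Finset.sum_sub_distrib]
    congr 1; funext i
    simp only [Finset.sum_ite_eq, Finset.mem_univ, if_true]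
    have : ∑ j, p s i * p s j * d j = p s i * ∑ j, p s j * d j := by
      rw [Finset.mul_sum]; congr 1; funext j; ring
    simp [this, mul_sub]
  -- MVT
  obtain ⟨c, hc, hceq⟩ := exists_hasDerivAt_eq_slope h (fun s => v ⬝ᵥ (softmaxJac (p s) *ᵥ d))
    (by norm_num : (0:ℝ) < 1)
    (fun x _ => (hderiv x).continuousAt.continuousWithinAt)
    (fun x _ => hderiv x)
  have hlow : κ * ∑ i, v i ^ 2 ≤ h 1 - h 0 := by
    have h1 := hκ c ⟨le_of_lt hc.1, le_of_lt hc.2⟩ v hvsum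
    calc κ * ∑ i, v i ^ 2 ≤ v ⬝ᵥ (softmaxJac (softmax (z' + c • d)) *ᵥ v) := h1
      _ = v ⬝ᵥ (softmaxJac (p c) *ᵥ d) := (hJ _).symm
      _ = h 1 - h 0 := by rw [hceq]; ring
  have hp1 : p 1 = softmax z := by simp [hp, hd]
  have hp0 : p 0 = softmax z' := by simp [hp]
  have hdiff : h 1 - h 0 = ∑ i, v i * (softmax z i - softmax z' i) := by
    simp [hph, hp1, hp0, ← Finset.sum_sub_distrib, mul_sub]
  -- Cauchy-Schwarz
  have hCS : ∑ i, v i * (softmax z i - softmax z' i) ≤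
      Real.sqrt (∑ i, v i ^ 2) * Real.sqrt (∑ i, (softmax z i - softmax z' i) ^ 2) := by
    have := Finset.sum_mul_sq_le_sq_mul_sq Finset.univ v (fun i => softmax z i - softmax z' i)
    have h2 : (∑ i, v i * (softmax z i - softmax z' i)) ≤
        |∑ i, v i * (softmax z i - softmax z' i)| := le_abs_self _
    calc ∑ i, v i * (softmax z i - softmax z' i)
        ≤ |∑ i, v i * (softmax z i - softmax z' i)| := h2
      _ = Real.sqrt ((∑ i, v i * (softmax z i - softmax z' i)) ^ 2) := (Real.sqrt_sq_eq_abs _).symm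
      _ ≤ Real.sqrt ((∑ i, v i ^ 2) * ∑ i, (softmax z i - softmax z' i) ^ 2) :=
          Real.sqrt_le_sqrt this
      _ = _ := Real.sqrt_mul (Finset.sum_nonneg fun i _ => sq_nonneg _) _
  have key : κ * ∑ i, v i ^ 2 ≤
      Real.sqrt (∑ i, v i ^ 2) * Real.sqrt (∑ i, (softmax z i - softmax z' i) ^ 2) := by
    calc κ * ∑ i, v i ^ 2 ≤ h 1 - h 0 := hlow
      _ = _ := hdiff
      _ ≤ _ := hCS
  -- conclude
  set A := Real.sqrt (∑ i, v i ^ 2) with hA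
  set B := Real.sqrt (∑ i, (softmax z i - softmax z' i) ^ 2) with hB
  have hAnn : 0 ≤ A := Real.sqrt_nonneg _
  have hBnn : 0 ≤ B := Real.sqrt_nonneg _
  have hA2 : A ^ 2 = ∑ i, v i ^ 2 := Real.sq_sqrt (Finset.sum_nonneg fun i _ => sq_nonneg _)
  rcases eq_or_lt_of_le hAnn with hA0 | hApos
  · rw [← hA0]; simpa using hBnn
  · have : κ * (A * A) ≤ A * B := by rw [← sq, hA2]; exact key
    have := (mul_le_mul_iff_of_pos_left hApos).mp (by linarith [this] : A * (κ * A) ≤ A * B)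
    linarith
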